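/- For all integers d, r ≥ 1, 0 ≤ ℓ ≤ d, and every integer t ≥ 0: (rt)^ℓ (rt+1)^{d−ℓ} = ∑_{(π,ε) ∈ ℤ_r ≀ S_d} binom(d + t − des_ℓ(π,ε), d), where the binomial coefficient binom(d + t − m, d) is 0 whenever t < m. (Equivalent finite form of Proposition 5.6, obtained from the half-open unimodular decomposition of the half-open cube [0,r]^d_ℓ.) -/

import Mathlib

open Polynomial


/-- The value `π_i ∈ {1, …, d}` of the underlying permutation of an element of the wreath
product `ℤ_r ≀ S_d` at position `i ∈ {1, …, d}`, with the convention `π_0 = 0`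
(and value `0` for out-of-range indices). -/
def wreathVal (d : ℕ) (π : Equiv.Perm (Fin d)) (i : ℕ) : ℕ :=
  if h : i - 1 < d ∧ 1 ≤ i then ((π ⟨i - 1, h.1⟩ : Fin d) : ℕ) + 1 else 0

/-- The color `c_i ∈ {0, …, r-1}` of an element of the wreath product `ℤ_r ≀ S_d` at
position `i ∈ {1, …, d}`, with the convention `c_0 = 0`. -/
def wreathCol (d r : ℕ) (ε : Fin d → Fin r) (i : ℕ) : ℕ :=
  if h : i - 1 < d ∧ 1 ≤ i then ((ε ⟨i - 1, h.1⟩ : Fin r) : ℕ) else 0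

/-- The descent set `Des(π, ε) ⊆ {0, 1, …, d-1}` of `(π, ε) ∈ ℤ_r ≀ S_d`:
`j ∈ Des(π, ε)` iff `π_j^{c_j} > π_{j+1}^{c_{j+1}}` in the order where
`i^{c} < j^{c'}` iff `c > c'`, or `c = c'` and `i < j`  (conventions `π_0 = 0`, `c_0 = 0`). -/
def wreathDes (d r : ℕ) (π : Equiv.Perm (Fin d)) (ε : Fin d → Fin r) : Finset ℕ :=
  (Finset.range d).filter fun j =>
    wreathCol d r ε j < wreathCol d r ε (j + 1) ∨
      (wreathCol d r ε j = wreathCol d r ε (j + 1) ∧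
        wreathVal d π (j + 1) < wreathVal d π j)

/-- The `ℓ`-descent statistic `des_ℓ(π, ε) = |Des_ℓ(π, ε)|`, where
`Des_ℓ(π, ε) = Des(π, ε) ∪ {0}` if `π_1 ∈ {1, …, ℓ}` and `Des_ℓ(π, ε) = Des(π, ε)`
otherwise. -/
def wreathDesL (d r ℓ : ℕ) (π : Equiv.Perm (Fin d)) (ε : Fin d → Fin r) : ℕ :=
  (wreathDes d r π ε ∪
      (if 1 ≤ wreathVal d π 1 ∧ wreathVal d π 1 ≤ ℓ then {0} else ∅)).card


namespace WreathProp

open Finset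

/-- extension of a `Fin d`-tuple to `ℕ` with value `0` at `0` and out of range. -/
def extN (d : ℕ) (f : Fin d → ℕ) (i : ℕ) : ℕ :=
  if h : i - 1 < d ∧ 1 ≤ i then f ⟨i - 1, h.1⟩ else 0

lemma extN_zero (d : ℕ) (f : Fin d → ℕ) : extN d f 0 = 0 := by simp [extN]

lemma extN_succ (d : ℕ) (f : Fin d → ℕ) (k : ℕ) (hk : k < d) :
    extN d f (k + 1) = f ⟨k, hk⟩ := by simp [extN, hk]

/-- weakly increasing sequences bounded by `t`, with strict increases at positions in `D`. -/
def seqs (d t : ℕ) (D : Finset ℕ) : Finset (Fin d → ℕ) :=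
  (Fintype.piFinset fun _ => Finset.range (t + 1)).filter
    fun f => ∀ j < d, extN d f j ≤ extN d f (j + 1) ∧ (j ∈ D → extN d f j < extN d f (j + 1))

lemma mem_seqs {d t : ℕ} {D : Finset ℕ} {f : Fin d → ℕ} :
    f ∈ seqs d t D ↔ (∀ k, f k ≤ t) ∧
      ∀ j < d, extN d f j ≤ extN d f (j + 1) ∧ (j ∈ D → extN d f j < extN d f (j + 1)) := by
  simp [seqs, Nat.lt_succ_iff]

lemma strictMono_of_lt_succ {α : Type*} [Preorder α] {d : ℕ} {f : Fin d → α}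
    (h : ∀ k, (hk : k + 1 < d) → f ⟨k, Nat.lt_of_succ_lt hk⟩ < f ⟨k + 1, hk⟩) :
    StrictMono f := by
  have key : ∀ n (i j : Fin d), (j : ℕ) = (i : ℕ) + n + 1 → f i < f j := by
    intro n
    induction n with
    | zero =>
      intro i j hij
      have hk : (i : ℕ) + 1 < d := hij ▸ j.isLt
      have hj : j = ⟨(i : ℕ) + 1, hk⟩ := Fin.ext (by simp only [Fin.val_mk]; omega)
      have := h (i : ℕ) hk
      rw [hj]
      simpa using this
    | succ n ih =>
      intro i j hij
      have hk : (i : ℕ) + n + 1 + 1 < d := hij ▸ j.isLt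
      have h1 := ih i ⟨(i : ℕ) + n + 1, Nat.lt_of_succ_lt hk⟩ (by simp)
      have h2 := h ((i : ℕ) + n + 1) hk
      have hj : j = ⟨(i : ℕ) + n + 1 + 1, hk⟩ := Fin.ext (by simp only [Fin.val_mk]; omega)
      rw [hj]
      exact h1.trans h2
  intro i j hij
  exact key ((j : ℕ) - (i : ℕ) - 1) i j (by have := (Fin.lt_def.mp hij); omega)

lemma strictMono_nat_add_le {d : ℕ} {f : Fin d → ℕ} (hf : StrictMono f) :
    ∀ (i j : Fin d), (i : ℕ) ≤ (j : ℕ) → f i + ((j : ℕ) - (i : ℕ)) ≤ f j := by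
  have key : ∀ n (i j : Fin d), (j : ℕ) = (i : ℕ) + n → f i + n ≤ f j := by
    intro n
    induction n with
    | zero => intro i j hij; have : i = j := Fin.ext (by omega); subst this; omega
    | succ n ih =>
      intro i j hij
      have hk : (i : ℕ) + n < d := by have := j.isLt; omega
      have h1 := ih i ⟨(i : ℕ) + n, hk⟩ (by simp)
      have h2 : f ⟨(i : ℕ) + n, hk⟩ < f j := hf (by rw [Fin.lt_def]; simp; omega)
      omega
  intro i j hij
  exact key ((j : ℕ) - (i : ℕ)) i j (by omega)

lemma card_seqs (d t : ℕ) (D : Finset ℕ) (hD : D ⊆ Finset.range d) :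
    (seqs d t D).card = Nat.choose (d + t - D.card) d := by
  classical
  set m := D.card with hm
  set a : ℕ → ℕ := fun j => (D ∩ Finset.range j).card with ha
  have ha0 : a 0 = 0 := by simp [ha]
  have haS : ∀ j, a (j + 1) = a j + (if j ∈ D then 1 else 0) := by
    intro j
    have hsplit : D ∩ Finset.range (j + 1) = (Finset.range (j + 1)) ∩ D := Finset.inter_comm _ _
    by_cases hjD : j ∈ D
    · rw [if_pos hjD, ha]
      simp only
      rw [hsplit, Finset.range_add_one, Finset.insert_inter_of_mem hjD,
        Finset.card_insert_of_notMem (by simp), Finset.inter_comm]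
    · rw [if_neg hjD, ha]
      simp only
      rw [hsplit, Finset.range_add_one, Finset.insert_inter_of_notMem hjD, Finset.inter_comm]
      omega
  have haM : ∀ j, a j ≤ m := fun j => Finset.card_le_card Finset.inter_subset_left
  have had : a d = m := by
    rw [ha]; simp only; rw [Finset.inter_eq_left.mpr hD]
  have hmd : m ≤ d := by
    have := Finset.card_le_card hD
    simpa using this
  -- the bijection
  set F : (Fin d → ℕ) → Finset ℕ :=
    fun f => Finset.image (fun k : Fin d => (extN d f ((k : ℕ) + 1) - a ((k : ℕ) + 1)) + (k : ℕ))
      Finset.univ with hF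
  set G : Finset ℕ → (Fin d → ℕ) :=
    fun s => if h : s.card = d then
      (fun k => (s.orderEmbOfFin h k - (k : ℕ)) + a ((k : ℕ) + 1)) else fun _ => 0 with hG
  have key : ∀ f ∈ seqs d t D,
      (∀ j ≤ d, a j ≤ extN d f j) ∧ (∀ j ≤ d, extN d f j + a d ≤ extN d f d + a j)
        ∧ (∀ j ≤ d, extN d f j ≤ t) := by
    intro f hf
    obtain ⟨hft, hfc⟩ := mem_seqs.mp hf
    have L1 : ∀ j ≤ d, a j ≤ extN d f j := by
      intro j hj
      induction j with
      | zero => rw [ha0, extN_zero]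
      | succ j ih =>
        have hj' : j < d := by omega
        have hc := hfc j hj'
        have := ih (by omega)
        rw [haS]
        by_cases hjD : j ∈ D
        · have := hc.2 hjD; rw [if_pos hjD]; omega
        · rw [if_neg hjD]; omega
    refine ⟨L1, ?_, ?_⟩
    · have L2 : ∀ i ≤ d, ∀ j ≤ i, extN d f j + a i ≤ extN d f i + a j := by
        intro i
        induction i with
        | zero =>
          intro _ j hj
          have hj0 : j = 0 := by omega
          subst hj0; omega
        | succ i ih =>
          intro hi j hj
          rcases eq_or_lt_of_le hj with rfl | hlt
          · omega
          · have h1 := ih (by omega) j (by omega)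
            have hc := hfc i (by omega)
            have h2 : extN d f i + a (i + 1) ≤ extN d f (i + 1) + a i := by
              rw [haS]
              by_cases hiD : i ∈ D
              · have := hc.2 hiD; rw [if_pos hiD]; omega
              · rw [if_neg hiD]; omega
            omega
      intro j hj; exact L2 d le_rfl j hj
    · intro j hj
      rw [extN]
      split
      · exact hft _
      · omega
  have hνmono : ∀ f ∈ seqs d t D, StrictMono
      (fun k : Fin d => (extN d f ((k : ℕ) + 1) - a ((k : ℕ) + 1)) + (k : ℕ)) := by
    intro f hf
    obtain ⟨hft, hfc⟩ := mem_seqs.mp hf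
    obtain ⟨L1, L2, L3⟩ := key f hf
    apply strictMono_of_lt_succ
    intro k hk
    simp only
    have hc := hfc (k + 1) hk
    have e1 := L1 (k + 1) (by omega)
    have e2 := L1 (k + 2) (by omega)
    have haSk := haS (k + 1)
    by_cases hkD : (k + 1) ∈ D
    · have := hc.2 hkD; rw [if_pos hkD] at haSk; omega
    · rw [if_neg hkD] at haSk; omega
  have hνbd : ∀ f ∈ seqs d t D, ∀ k : Fin d,
      (extN d f ((k : ℕ) + 1) - a ((k : ℕ) + 1)) + (k : ℕ) < d + t - m := by
    intro f hf k
    obtain ⟨L1, L2, L3⟩ := key f hf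
    have h1 := L2 ((k : ℕ) + 1) (by have := k.isLt; omega)
    have h2 := L1 ((k : ℕ) + 1) (by have := k.isLt; omega)
    have h3 := L3 d le_rfl
    have h4 := L1 d le_rfl
    have h5 := k.isLt
    omega
  have hcard : ∀ f ∈ seqs d t D, (F f).card = d := by
    intro f hf
    rw [hF]
    simp only
    rw [Finset.card_image_of_injective _ (hνmono f hf).injective, Finset.card_univ,
      Fintype.card_fin]
  rw [show Nat.choose (d + t - m) d = ((Finset.range (d + t - m)).powersetCard d).card by
    rw [Finset.card_powersetCard, Finset.card_range]]
  apply Finset.card_nbij' F G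
  · -- F maps into powersetCard
    intro f hf
    rw [Finset.mem_coe, Finset.mem_powersetCard]
    refine ⟨?_, hcard f hf⟩
    intro x hx
    rw [hF] at hx
    simp only [Finset.mem_image, Finset.mem_univ, true_and] at hx
    obtain ⟨k, rfl⟩ := hx
    rw [Finset.mem_range]
    exact hνbd f hf k
  · -- G maps into seqs
    intro s hs
    rw [Finset.mem_coe, Finset.mem_powersetCard] at hs
    obtain ⟨hs1, hs2⟩ := hs
    rw [hG]
    simp only
    rw [dif_pos hs2]
    set e := s.orderEmbOfFin hs2 with he
    have hemem : ∀ k : Fin d, e k < d + t - m := by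
      intro k
      have := hs1 (Finset.orderEmbOfFin_mem s hs2 k)
      rwa [Finset.mem_range] at this
    have hkle : ∀ k : Fin d, (k : ℕ) ≤ e k := by
      intro k
      have hd0 : 0 < d := k.pos
      have := strictMono_nat_add_le e.strictMono ⟨0, hd0⟩ k (by simp)
      simp only [Fin.val_mk, Nat.sub_zero] at this
      omega
    have hdle : d ≤ d + t - m := by
      have := Finset.card_le_card hs1
      rw [hs2, Finset.card_range] at this
      exact this
    have hbnd : ∀ k : Fin d, e k - (k : ℕ) + a ((k : ℕ) + 1) ≤ t := by
      intro k
      have hd0 : 0 < d := k.pos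
      have hlast : (k : ℕ) ≤ d - 1 := by have := k.isLt; omega
      have hchain := strictMono_nat_add_le e.strictMono k ⟨d - 1, by omega⟩ (by simpa using hlast)
      have hlt := hemem ⟨d - 1, by omega⟩
      have haMk := haM ((k : ℕ) + 1)
      simp only [Fin.val_mk] at hchain hlt
      omega
    rw [Finset.mem_coe, mem_seqs]
    constructor
    · exact hbnd
    · intro j hj
      match j, hj with
      | 0, hj =>
        rw [extN_zero, extN_succ d _ 0 hj]
        refine ⟨Nat.zero_le _, fun hmem => ?_⟩
        have h1 := haS 0
        rw [if_pos hmem, ha0] at h1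
        simp only
        omega
      | (k+1), hj =>
        have hk' : k < d := by omega
        rw [extN_succ d _ k hk', extN_succ d _ (k+1) hj]
        simp only
        have hlt : e ⟨k, hk'⟩ < e ⟨k+1, hj⟩ := e.strictMono (by rw [Fin.lt_def]; simp)
        have hk1 := hkle ⟨k, hk'⟩
        have hk2 := hkle ⟨k+1, hj⟩
        have haSk := haS (k + 1)
        simp only [Fin.val_mk] at hlt hk1 hk2
        constructor
        · by_cases hkD : (k+1) ∈ D
          · rw [if_pos hkD] at haSk; omega
          · rw [if_neg hkD] at haSk; omega
        · intro hmem
          rw [if_pos hmem] at haSk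
          omega
  · -- G (F f) = f
    intro f hf
    have hc := hcard f hf
    rw [hG]
    simp only
    rw [dif_pos hc]
    have huniq : (fun k : Fin d => (extN d f ((k : ℕ) + 1) - a ((k : ℕ) + 1)) + (k : ℕ))
        = ⇑((F f).orderEmbOfFin hc) := by
      apply Finset.orderEmbOfFin_unique hc
      · intro k
        rw [hF]
        simp only [Finset.mem_image, Finset.mem_univ, true_and]
        exact ⟨k, rfl⟩
      · exact hνmono f hf
    funext k
    rw [← congrFun huniq k]
    obtain ⟨L1, L2, L3⟩ := key f hf
    have h1 := L1 ((k : ℕ) + 1) (by have := k.isLt; omega)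
    have h2 : extN d f ((k : ℕ) + 1) = f k := by
      rw [extN_succ d f (k : ℕ) k.isLt]
    omega
  · -- F (G s) = s
    intro s hs
    rw [Finset.mem_coe, Finset.mem_powersetCard] at hs
    obtain ⟨hs1, hs2⟩ := hs
    set e := s.orderEmbOfFin hs2 with he
    have hkle : ∀ k : Fin d, (k : ℕ) ≤ e k := by
      intro k
      have hd0 : 0 < d := k.pos
      have := strictMono_nat_add_le e.strictMono ⟨0, hd0⟩ k (by simp)
      simp only [Fin.val_mk, Nat.sub_zero] at this
      omega
    have hGs : ∀ k : Fin d, extN d (G s) ((k : ℕ) + 1) = e k - (k : ℕ) + a ((k : ℕ) + 1) := by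
      intro k
      rw [extN_succ d _ (k : ℕ) k.isLt, hG]
      simp only
      rw [dif_pos hs2]
    have hval : ∀ k : Fin d, extN d (G s) ((k : ℕ) + 1) - a ((k : ℕ) + 1) + (k : ℕ) = e k := by
      intro k
      rw [hGs k]
      have := hkle k
      omega
    rw [hF]
    simp only
    ext x
    simp only [Finset.mem_image, Finset.mem_univ, true_and]
    constructor
    · rintro ⟨k, rfl⟩
      rw [hval k]
      exact Finset.orderEmbOfFin_mem s hs2 k
    · intro hx
      have : x ∈ Set.range e := by
        rw [Finset.range_orderEmbOfFin]
        exact hx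
      obtain ⟨k, hk⟩ := this
      exact ⟨k, by rw [hval k, hk]⟩

/-! ### Ceiling division and colors -/

/-- ceiling division -/
def cdiv (r x : ℕ) : ℕ := (x + r - 1) / r

/-- color of a value -/
def ccol (r x : ℕ) : ℕ := r * cdiv r x - x

lemma le_mul_cdiv {r : ℕ} (hr : 1 ≤ r) (x : ℕ) : x ≤ r * cdiv r x := by
  have h1 := Nat.div_add_mod (x + r - 1) r
  have h2 : (x + r - 1) % r < r := Nat.mod_lt _ (by omega)
  rw [cdiv]
  omega

lemma ccol_lt {r : ℕ} (hr : 1 ≤ r) (x : ℕ) : ccol r x < r := by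
  have h3 := Nat.div_mul_le_self (x + r - 1) r
  have h4 : r * ((x + r - 1) / r) = ((x + r - 1) / r) * r := Nat.mul_comm _ _
  rw [ccol, cdiv]
  omega

lemma ccol_add {r : ℕ} (hr : 1 ≤ r) (x : ℕ) : x + ccol r x = r * cdiv r x := by
  have := le_mul_cdiv hr x
  rw [ccol]
  omega

lemma cdiv_ccol {r : ℕ} (hr : 1 ≤ r) (x : ℕ) : r * cdiv r x - ccol r x = x := by
  have := ccol_add hr x
  omega

lemma cdiv_le {r x t : ℕ} (hr : 1 ≤ r) (h : x ≤ r * t) : cdiv r x ≤ t := by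
  rw [cdiv, ← Nat.lt_succ_iff, Nat.div_lt_iff_lt_mul (by omega)]
  have h1 : Nat.succ t * r = t * r + r := Nat.succ_mul t r
  have h2 : r * t = t * r := Nat.mul_comm _ _
  omega

lemma cdiv_eq_zero_iff {r x : ℕ} (hr : 1 ≤ r) : cdiv r x = 0 ↔ x = 0 := by
  rw [cdiv, Nat.div_eq_zero_iff]
  omega

lemma cdiv_mono {r x y : ℕ} (h : x ≤ y) : cdiv r x ≤ cdiv r y :=
  Nat.div_le_div_right (by omega)

lemma cdiv_spec {r : ℕ} (hr : 1 ≤ r) (m c : ℕ) (hc : c < r) (h0 : m = 0 → c = 0) :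
    cdiv r (r * m - c) = m ∧ ccol r (r * m - c) = c := by
  rcases Nat.eq_zero_or_pos m with rfl | hm
  · have hc0 : c = 0 := h0 rfl
    subst hc0
    have h1 : cdiv r (r * 0 - 0) = 0 := by
      rw [cdiv]
      exact Nat.div_eq_of_lt (by omega)
    exact ⟨h1, by rw [ccol, h1]; omega⟩
  · have hrm : r ≤ r * m := Nat.le_mul_of_pos_right r hm
    have hy : r * m - c + r - 1 = r * m + (r - 1 - c) := by omega
    have hdiv : cdiv r (r * m - c) = m := by
      rw [cdiv, hy, Nat.mul_add_div (by omega), Nat.div_eq_of_lt (by omega)]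
      omega
    refine ⟨hdiv, ?_⟩
    rw [ccol, hdiv]
    omega

/-! ### The `ℓ`-descent set as a finset -/

variable {d r ℓ t : ℕ}

/-- The `ℓ`-descent set. -/
def DL (d r ℓ : ℕ) (π : Equiv.Perm (Fin d)) (ε : Fin d → Fin r) : Finset ℕ :=
  wreathDes d r π ε ∪
    (if 1 ≤ wreathVal d π 1 ∧ wreathVal d π 1 ≤ ℓ then {0} else ∅)

lemma wreathDesL_eq (π : Equiv.Perm (Fin d)) (ε : Fin d → Fin r) :
    wreathDesL d r ℓ π ε = (DL d r ℓ π ε).card := rfl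

lemma DL_subset (hd : 1 ≤ d) (π : Equiv.Perm (Fin d)) (ε : Fin d → Fin r) :
    DL d r ℓ π ε ⊆ Finset.range d := by
  apply Finset.union_subset (Finset.filter_subset _ _)
  split
  · intro x hx
    rw [Finset.mem_singleton] at hx
    subst hx
    rw [Finset.mem_range]
    omega
  · intro x hx
    simp at hx

lemma wreathCol_zero (ε : Fin d → Fin r) : wreathCol d r ε 0 = 0 := by simp [wreathCol]

lemma wreathCol_succ (ε : Fin d → Fin r) (k : ℕ) (hk : k < d) :
    wreathCol d r ε (k + 1) = (ε ⟨k, hk⟩ : ℕ) := by simp [wreathCol, hk]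

lemma wreathVal_zero (π : Equiv.Perm (Fin d)) : wreathVal d π 0 = 0 := by simp [wreathVal]

lemma wreathVal_succ (π : Equiv.Perm (Fin d)) (k : ℕ) (hk : k < d) :
    wreathVal d π (k + 1) = (π ⟨k, hk⟩ : ℕ) + 1 := by simp [wreathVal, hk]

lemma mem_DL_zero (hd : 1 ≤ d) {π : Equiv.Perm (Fin d)} {ε : Fin d → Fin r} :
    0 ∈ DL d r ℓ π ε ↔
      (0 < (ε ⟨0, hd⟩ : ℕ) ∨ (π ⟨0, hd⟩ : ℕ) + 1 ≤ ℓ) := by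
  rw [DL, Finset.mem_union]
  constructor
  · rintro (h | h)
    · rw [wreathDes, Finset.mem_filter] at h
      obtain ⟨-, h⟩ := h
      rw [wreathCol_zero, wreathCol_succ ε 0 hd, wreathVal_zero, wreathVal_succ π 0 hd] at h
      rcases h with h | ⟨-, h⟩
      · exact Or.inl h
      · omega
    · split at h
      · next hcond =>
          rw [wreathVal_succ π 0 hd] at hcond
          exact Or.inr hcond.2
      · simp at h
  · intro h
    rcases h with h | h
    · left
      rw [wreathDes, Finset.mem_filter]
      refine ⟨Finset.mem_range.mpr (by omega), ?_⟩
      rw [wreathCol_zero, wreathCol_succ ε 0 hd]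
      exact Or.inl h
    · right
      rw [wreathVal_succ π 0 hd]
      rw [if_pos ⟨by omega, h⟩]
      exact Finset.mem_singleton_self 0

lemma mem_DL_succ {π : Equiv.Perm (Fin d)} {ε : Fin d → Fin r} (k : ℕ) (hk : k + 1 < d) :
    (k + 1) ∈ DL d r ℓ π ε ↔
      ((ε ⟨k, Nat.lt_of_succ_lt hk⟩ : ℕ) < (ε ⟨k + 1, hk⟩ : ℕ) ∨
        ((ε ⟨k, Nat.lt_of_succ_lt hk⟩ : ℕ) = (ε ⟨k + 1, hk⟩ : ℕ) ∧
          (π ⟨k + 1, hk⟩ : ℕ) < (π ⟨k, Nat.lt_of_succ_lt hk⟩ : ℕ))) := by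
  have hk' : k < d := Nat.lt_of_succ_lt hk
  rw [DL, Finset.mem_union]
  have hnot : (k + 1) ∉ (if 1 ≤ wreathVal d π 1 ∧ wreathVal d π 1 ≤ ℓ
      then ({0} : Finset ℕ) else ∅) := by
    split <;> simp
  rw [wreathDes, Finset.mem_filter]
  rw [wreathCol_succ ε k hk', wreathCol_succ ε (k+1) hk,
    wreathVal_succ π k hk', wreathVal_succ π (k+1) hk]
  constructor
  · rintro (⟨-, h⟩ | h)
    · rcases h with h | ⟨h1, h2⟩
      · exact Or.inl h
      · exact Or.inr ⟨h1, by omega⟩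
    · exact absurd h hnot
  · intro h
    left
    refine ⟨Finset.mem_range.mpr hk, ?_⟩
    rcases h with h | ⟨h1, h2⟩
    · exact Or.inl h
    · exact Or.inr ⟨h1, by omega⟩

/-! ### The bijection -/

/-- From wreath data to a lattice point. -/
def Phi (d r : ℕ) (q : Σ _ : Equiv.Perm (Fin d) × (Fin d → Fin r), Fin d → ℕ) :
    Fin d → ℕ :=
  fun i => r * q.2 (q.1.1.symm i) - (q.1.2 (q.1.1.symm i) : ℕ)

/-- From a lattice point to wreath data. -/
def Psi (d r : ℕ) (hr : 1 ≤ r) (x : Fin d → ℕ) :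
    Σ _ : Equiv.Perm (Fin d) × (Fin d → Fin r), Fin d → ℕ :=
  ⟨(Tuple.sort x, fun k => ⟨ccol r (x (Tuple.sort x k)), ccol_lt hr _⟩),
    fun k => cdiv r (x (Tuple.sort x k))⟩

lemma sigma_pair_eq {P Q : Type*} {a a' : P} {b b' : Q} (h1 : a = a') (h2 : b = b') :
    (⟨a, b⟩ : Σ _ : P, Q) = ⟨a', b'⟩ := by subst h1; subst h2; rfl

lemma zero_forces (hd : 1 ≤ d) {π : Equiv.Perm (Fin d)} {ε : Fin d → Fin r} {f : Fin d → ℕ}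
    (hf : f ∈ seqs d t (DL d r ℓ π ε)) :
    ∀ k (hk : k < d), f ⟨k, hk⟩ = 0 → (ε ⟨k, hk⟩ : ℕ) = 0 ∧ ℓ ≤ (π ⟨k, hk⟩ : ℕ) := by
  obtain ⟨hft, hfc⟩ := mem_seqs.mp hf
  intro k
  induction k with
  | zero =>
    intro hk h0
    have hc := hfc 0 hk
    rw [extN_zero, extN_succ d f 0 hk] at hc
    have hnot : 0 ∉ DL d r ℓ π ε := fun hmem => by
      have := hc.2 hmem; omega
    rw [mem_DL_zero hk] at hnot
    push_neg at hnot
    exact ⟨by omega, by omega⟩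
  | succ k ih =>
    intro hk h0
    have hk' : k < d := by omega
    have hc := hfc (k + 1) hk
    rw [extN_succ d f k hk', extN_succ d f (k + 1) hk] at hc
    have hfk : f ⟨k, hk'⟩ = 0 := by omega
    obtain ⟨hε, hπ⟩ := ih hk' hfk
    have hnot : (k + 1) ∉ DL d r ℓ π ε := fun hmem => by
      have := hc.2 hmem; omega
    rw [mem_DL_succ k hk] at hnot
    push_neg at hnot
    obtain ⟨h1, h2⟩ := hnot
    refine ⟨by omega, ?_⟩
    have := h2 (by omega)
    omega

lemma Phi_mem (hd : 1 ≤ d) (hr : 1 ≤ r) {π : Equiv.Perm (Fin d)} {ε : Fin d → Fin r}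
    {f : Fin d → ℕ} (hf : f ∈ seqs d t (DL d r ℓ π ε)) :
    Phi d r ⟨(π, ε), f⟩ ∈ Fintype.piFinset
      (fun i : Fin d => Finset.Icc (if (i : ℕ) < ℓ then 1 else 0) (r * t)) := by
  obtain ⟨hft, -⟩ := mem_seqs.mp hf
  rw [Fintype.mem_piFinset]
  intro i
  rw [Finset.mem_Icc]
  set k := π.symm i with hkdef
  have hval : Phi d r ⟨(π, ε), f⟩ i = r * f k - (ε k : ℕ) := rfl
  have hub : r * f k ≤ r * t := Nat.mul_le_mul_left r (hft k)
  constructor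
  · split_ifs with hiℓ
    · by_cases h0 : f k = 0
      · exfalso
        have hz := (zero_forces hd hf (k : ℕ) k.isLt h0).2
        have hπk : π ⟨(k : ℕ), k.isLt⟩ = i := by
          show π k = i
          rw [hkdef]
          exact Equiv.apply_symm_apply π i
        rw [hπk] at hz
        omega
      · have hεk : (ε k : ℕ) < r := (ε k).isLt
        have hmul : r ≤ r * f k := Nat.le_mul_of_pos_right r (by omega)
        rw [hval]
        omega
    · exact Nat.zero_le _
  · rw [hval]
    omega

lemma Psi_Phi (hd : 1 ≤ d) (hr : 1 ≤ r) {π : Equiv.Perm (Fin d)} {ε : Fin d → Fin r}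
    {f : Fin d → ℕ} (hf : f ∈ seqs d t (DL d r ℓ π ε)) :
    Psi d r hr (Phi d r ⟨(π, ε), f⟩) = ⟨(π, ε), f⟩ := by
  obtain ⟨hft, hfc⟩ := mem_seqs.mp hf
  set x := Phi d r ⟨(π, ε), f⟩ with hxdef
  have hxk : ∀ k : Fin d, x (π k) = r * f k - (ε k : ℕ) := by
    intro k
    rw [hxdef]
    show r * f (π.symm (π k)) - (ε (π.symm (π k)) : ℕ) = _
    rw [Equiv.symm_apply_apply]
  have hzf : ∀ k : Fin d, f k = 0 → (ε k : ℕ) = 0 :=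
    fun k h => (zero_forces hd hf (k : ℕ) k.isLt h).1
  have hA : ∀ (k : ℕ) (hk : k + 1 < d),
      x (π ⟨k, Nat.lt_of_succ_lt hk⟩) < x (π ⟨k + 1, hk⟩) ∨
        (x (π ⟨k, Nat.lt_of_succ_lt hk⟩) = x (π ⟨k + 1, hk⟩) ∧
          π ⟨k, Nat.lt_of_succ_lt hk⟩ < π ⟨k + 1, hk⟩) := by
    intro k hk
    have hk' : k < d := Nat.lt_of_succ_lt hk
    have hc := hfc (k + 1) hk
    rw [extN_succ d f k hk', extN_succ d f (k + 1) hk] at hc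
    have hx1 := hxk ⟨k, hk'⟩
    have hx2 := hxk ⟨k + 1, hk⟩
    have hε1 : (ε ⟨k, hk'⟩ : ℕ) < r := (ε _).isLt
    have hε2 : (ε ⟨k + 1, hk⟩ : ℕ) < r := (ε _).isLt
    have hmul : r * f ⟨k, hk'⟩ ≤ r * f ⟨k + 1, hk⟩ := Nat.mul_le_mul_left r hc.1
    by_cases hmem : (k + 1) ∈ DL d r ℓ π ε
    · left
      have hlt := hc.2 hmem
      have hmul2 : r * f ⟨k, hk'⟩ + r ≤ r * f ⟨k + 1, hk⟩ := by
        have := Nat.mul_le_mul_left r (show f ⟨k, hk'⟩ + 1 ≤ f ⟨k + 1, hk⟩ by omega)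
        rw [Nat.mul_add, Nat.mul_one] at this
        omega
      omega
    · rw [mem_DL_succ k hk] at hmem
      push_neg at hmem
      obtain ⟨hge, himp⟩ := hmem
      rcases Nat.lt_or_ge ((ε ⟨k + 1, hk⟩ : Fin r) : ℕ) ((ε ⟨k, hk'⟩ : Fin r) : ℕ) with hεlt | hεge
      · left
        have hne : f ⟨k, hk'⟩ ≠ 0 := fun h => by
          have := hzf _ h
          omega
        have hmulr : r ≤ r * f ⟨k, hk'⟩ := Nat.le_mul_of_pos_right r (by omega)
        omega
      · have hεeq : (ε ⟨k, hk'⟩ : ℕ) = (ε ⟨k + 1, hk⟩ : ℕ) := by omega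
        have hπle : (π ⟨k, hk'⟩ : ℕ) ≤ (π ⟨k + 1, hk⟩ : ℕ) := himp hεeq
        have hπne : π ⟨k, hk'⟩ ≠ π ⟨k + 1, hk⟩ := by
          intro h
          have h2 := π.injective h
          simp only [Fin.mk.injEq] at h2
          omega
        have hπlt : π ⟨k, hk'⟩ < π ⟨k + 1, hk⟩ :=
          lt_of_le_of_ne (by rw [Fin.le_def]; exact hπle) hπne
        rcases Nat.lt_or_ge (f ⟨k, hk'⟩) (f ⟨k + 1, hk⟩) with hflt | hfge
        · left
          by_cases h0 : f ⟨k, hk'⟩ = 0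
          · have hε0 := hzf _ h0
            have hmulr2 : r ≤ r * f ⟨k + 1, hk⟩ := Nat.le_mul_of_pos_right r (by omega)
            have hz : r * f ⟨k, hk'⟩ = 0 := by rw [h0, Nat.mul_zero]
            omega
          · have hmulr : r ≤ r * f ⟨k, hk'⟩ := Nat.le_mul_of_pos_right r (by omega)
            have hmul2 : r * f ⟨k, hk'⟩ + r ≤ r * f ⟨k + 1, hk⟩ := by
              have := Nat.mul_le_mul_left r (show f ⟨k, hk'⟩ + 1 ≤ f ⟨k + 1, hk⟩ by omega)
              rw [Nat.mul_add, Nat.mul_one] at this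
              omega
            omega
        · have hfeq : f ⟨k, hk'⟩ = f ⟨k + 1, hk⟩ := by omega
          right
          refine ⟨?_, hπlt⟩
          rw [hx1, hx2, hfeq, hεeq]
  have hg : StrictMono (fun j : Fin d => toLex ((x (π j), π j))) := by
    apply strictMono_of_lt_succ
    intro k hk
    rw [Prod.Lex.lt_iff]
    exact hA k hk
  have hmono : Monotone (x ∘ π) := by
    intro i j hij
    rcases eq_or_lt_of_le hij with rfl | hlt
    · exact le_rfl
    · rcases Prod.Lex.lt_iff.mp (hg hlt) with h | ⟨h, -⟩
      · exact le_of_lt h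
      · exact le_of_eq h
  have hties : ∀ i j, i < j → x (π i) = x (π j) → π i < π j := by
    intro i j hij hxeq
    rcases Prod.Lex.lt_iff.mp (hg hij) with h | ⟨-, h⟩
    · exact absurd hxeq (ne_of_lt h)
    · exact h
  have hsort : π = Tuple.sort x := Tuple.eq_sort_iff.mpr ⟨hmono, hties⟩
  have hcv : ∀ k : Fin d, cdiv r (x (π k)) = f k ∧ ccol r (x (π k)) = (ε k : ℕ) := by
    intro k
    rw [hxk k]
    exact cdiv_spec hr (f k) (ε k) (ε k).isLt (fun h => hzf k h)
  unfold Psi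
  apply sigma_pair_eq
  · have hcol : (fun k => (⟨ccol r (x (Tuple.sort x k)), ccol_lt hr _⟩ : Fin r)) = ε := by
      funext k
      apply Fin.ext
      show ccol r (x (Tuple.sort x k)) = (ε k : ℕ)
      rw [← hsort]
      exact (hcv k).2
    rw [hcol, ← hsort]
  · funext k
    show cdiv r (x (Tuple.sort x k)) = f k
    rw [← hsort]
    exact (hcv k).1

lemma Psi_snd_mem (hd : 1 ≤ d) (hr : 1 ≤ r) {x : Fin d → ℕ}
    (hx : x ∈ Fintype.piFinset
      fun i : Fin d => Finset.Icc (if (i : ℕ) < ℓ then 1 else 0) (r * t)) :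
    (Psi d r hr x).2 ∈ seqs d t (DL d r ℓ (Psi d r hr x).1.1 (Psi d r hr x).1.2) := by
  rw [Fintype.mem_piFinset] at hx
  have hx' : ∀ i : Fin d, (if (i : ℕ) < ℓ then 1 else 0) ≤ x i ∧ x i ≤ r * t := by
    intro i
    have := hx i
    rwa [Finset.mem_Icc] at this
  set σ := Tuple.sort x with hσ
  have hsnd : (Psi d r hr x).2 = fun k => cdiv r (x (σ k)) := rfl
  have hfst1 : (Psi d r hr x).1.1 = σ := rfl
  have hcolval : ∀ k : Fin d, ((Psi d r hr x).1.2 k : ℕ) = ccol r (x (σ k)) := fun k => rfl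
  have hmono : Monotone (x ∘ σ) := Tuple.monotone_sort x
  have hties : ∀ i j : Fin d, i < j → x (σ i) = x (σ j) → σ i < σ j :=
    (Tuple.eq_sort_iff.mp hσ).2
  rw [hsnd, hfst1, mem_seqs]
  refine ⟨fun k => cdiv_le hr (hx' _).2, ?_⟩
  intro j hj
  match j, hj with
  | 0, hj =>
    rw [extN_zero, extN_succ d _ 0 hj]
    refine ⟨Nat.zero_le _, fun hmem => ?_⟩
    rw [mem_DL_zero hj] at hmem
    simp only [hcolval] at hmem
    by_contra h0
    have hc0 : cdiv r (x (σ ⟨0, hj⟩)) = 0 := by omega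
    have hx0 : x (σ ⟨0, hj⟩) = 0 := (cdiv_eq_zero_iff hr).mp hc0
    rcases hmem with h | h
    · rw [hx0] at h
      have hz : ccol r 0 = 0 := by
        have h2 : cdiv r (0 : ℕ) = 0 := (cdiv_eq_zero_iff hr).mpr rfl
        rw [ccol, h2, Nat.mul_zero]
      omega
    · have := (hx' (σ ⟨0, hj⟩)).1
      rw [if_pos (by omega)] at this
      omega
  | (k+1), hj =>
    have hk' : k < d := by omega
    rw [extN_succ d _ k hk', extN_succ d _ (k+1) hj]
    have hxm : x (σ ⟨k, hk'⟩) ≤ x (σ ⟨k + 1, hj⟩) := hmono (by rw [Fin.le_def]; simp)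
    refine ⟨cdiv_mono hxm, fun hmem => ?_⟩
    rw [mem_DL_succ k hj] at hmem
    simp only [hcolval] at hmem
    by_contra hle
    have heq : cdiv r (x (σ ⟨k, hk'⟩)) = cdiv r (x (σ ⟨k + 1, hj⟩)) :=
      le_antisymm (cdiv_mono hxm) (by omega)
    have e1 := ccol_add hr (x (σ ⟨k, hk'⟩))
    have e2 := ccol_add hr (x (σ ⟨k + 1, hj⟩))
    rw [heq] at e1
    rcases hmem with h | ⟨h1, h2⟩
    · omega
    · have hxeq : x (σ ⟨k, hk'⟩) = x (σ ⟨k + 1, hj⟩) := by omega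
      have hlt := hties ⟨k, hk'⟩ ⟨k + 1, hj⟩ (by rw [Fin.lt_def]; simp) hxeq
      rw [Fin.lt_def] at hlt
      omega

lemma Phi_Psi (hr : 1 ≤ r) (x : Fin d → ℕ) : Phi d r (Psi d r hr x) = x := by
  funext i
  show r * cdiv r (x (Tuple.sort x ((Tuple.sort x).symm i)))
      - ccol r (x (Tuple.sort x ((Tuple.sort x).symm i))) = x i
  rw [Equiv.apply_symm_apply]
  exact cdiv_ccol hr _

end WreathProp



open WreathProp

/-- Finite form of Proposition 5.6: for all `d, r ≥ 1`, `0 ≤ ℓ ≤ d` and every `t ≥ 0`,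
`(rt)^ℓ (rt+1)^{d-ℓ} = ∑_{(π,ε) ∈ ℤ_r ≀ S_d} binom(d + t - des_ℓ(π,ε), d)`,
where (thanks to truncated subtraction on `ℕ` and `des_ℓ ≤ d`) the binomial coefficient
vanishes whenever `t < des_ℓ(π,ε)`. -/
theorem pow_eq_sum_choose_wreath_descent (d r ℓ t : ℕ) (hd : 1 ≤ d) (hr : 1 ≤ r)
    (hℓ : ℓ ≤ d) :
    (r * t) ^ ℓ * (r * t + 1) ^ (d - ℓ) =
      ∑ π : Equiv.Perm (Fin d), ∑ ε : Fin d → Fin r,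
        Nat.choose (d + t - wreathDesL d r ℓ π ε) d := by
  classical
  set S : Finset (Fin d → ℕ) :=
    Fintype.piFinset fun i : Fin d => Finset.Icc (if (i : ℕ) < ℓ then 1 else 0) (r * t)
    with hSdef
  have hcardS : S.card = (r * t) ^ ℓ * (r * t + 1) ^ (d - ℓ) := by
    rw [hSdef, Fintype.card_piFinset]
    have hIcc : ∀ i : Fin d, (Finset.Icc (if (i : ℕ) < ℓ then 1 else 0) (r * t)).card
        = if (i : ℕ) < ℓ then r * t else r * t + 1 := by
      intro i
      rw [Nat.card_Icc]
      split_ifs <;> omega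
    rw [Finset.prod_congr rfl fun i _ => hIcc i, Finset.prod_ite,
      Finset.prod_const, Finset.prod_const]
    have hc1 : (Finset.univ.filter fun i : Fin d => (i : ℕ) < ℓ).card = ℓ := by
      rw [← Finset.card_range ℓ]
      apply Finset.card_nbij (fun i : Fin d => (i : ℕ))
      · intro a ha
        simp only [Finset.mem_coe, Finset.mem_filter, Finset.mem_univ, true_and] at ha
        simpa using ha
      · intro a _ b _ hab
        exact Fin.ext hab
      · intro y hy
        simp only [Finset.coe_range, Set.mem_Iio] at hy
        exact ⟨⟨y, by omega⟩, by simp [hy], rfl⟩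
    have hc2 : (Finset.univ.filter fun i : Fin d => ¬ (i : ℕ) < ℓ).card = d - ℓ := by
      have htot := Finset.card_filter_add_card_filter_not
        (s := (Finset.univ : Finset (Fin d))) (p := fun i : Fin d => (i : ℕ) < ℓ)
      rw [Finset.card_univ, Fintype.card_fin] at htot
      omega
    rw [hc1, hc2]
  set SG := (Finset.univ : Finset (Equiv.Perm (Fin d) × (Fin d → Fin r))).sigma
      (fun p => seqs d t (DL d r ℓ p.1 p.2)) with hSGdef
  have hcardSG : SG.card = ∑ π : Equiv.Perm (Fin d), ∑ ε : Fin d → Fin r,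
      Nat.choose (d + t - wreathDesL d r ℓ π ε) d := by
    rw [hSGdef, Finset.card_sigma, Fintype.sum_prod_type]
    exact Finset.sum_congr rfl fun π _ => Finset.sum_congr rfl fun ε _ => by
      rw [card_seqs d t _ (DL_subset hd π ε), wreathDesL_eq]
  have hmain : S.card = SG.card := by
    apply Finset.card_nbij' (Psi d r hr) (Phi d r)
    · intro x hxS
      rw [hSGdef, Finset.mem_coe, Finset.mem_sigma]
      exact ⟨Finset.mem_univ _, Psi_snd_mem hd hr (by rwa [hSdef] at hxS)⟩
    · rintro ⟨⟨π, ε⟩, f⟩ hq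
      rw [hSGdef, Finset.mem_coe, Finset.mem_sigma] at hq
      rw [hSdef]
      exact Phi_mem hd hr hq.2
    · intro x hxS
      exact Phi_Psi hr x
    · rintro ⟨⟨π, ε⟩, f⟩ hq
      rw [hSGdef, Finset.mem_coe, Finset.mem_sigma] at hq
      exact Psi_Phi hd hr hq.2
  rw [← hcardS, hmain, hcardSG]
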